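/- Let M ⊆ ℝ^{V×d} be a linear subspace, A ∈ ℝ^{V×V}, and W ∈ ℝ^{d×d}. Suppose M is invariant under X ↦ AXW (i.e., Z ∈ M implies AZW ∈ M). Then θ_M(AXW) ≤ ‖A‖_op · ‖W‖_op · θ_M(X), where ‖·‖_op is the operator norm induced by the Frobenius norm on matrices. In particular if ‖A‖_op‖W‖_op < 1, linear GNN layers contract the distance to the subspace M geometrically. -/
import Mathlib


/-- Frobenius norm of a real matrix. -/
noncomputable def frobNorm {m n : ℕ} (X : Matrix (Fin m) (Fin n) ℝ) : ℝ :=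
  Real.sqrt (∑ i, ∑ j, (X i j) ^ 2)

/-- Projection loss onto a subspace M: the distance from X to M in Frobenius norm. -/
noncomputable def projLoss {V d : ℕ} (M : Submodule ℝ (Matrix (Fin V) (Fin d) ℝ))
    (X : Matrix (Fin V) (Fin d) ℝ) : ℝ :=
  sInf {r : ℝ | ∃ Z ∈ M, r = frobNorm (X - Z)}

/-- Operator norm of a square matrix induced by the Euclidean (equivalently Frobenius)
norm: the least nonnegative constant c with ‖Mv‖ ≤ c‖v‖ for all v. -/
noncomputable def opNorm {n : ℕ} (A : Matrix (Fin n) (Fin n) ℝ) : ℝ :=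
  sInf {c : ℝ | 0 ≤ c ∧ ∀ v : Fin n → ℝ,
    Real.sqrt (∑ i, (A.mulVec v i) ^ 2) ≤ c * Real.sqrt (∑ i, (v i) ^ 2)}

namespace AuxGNN

lemma sum_sq_nonneg {n : ℕ} (v : Fin n → ℝ) : 0 ≤ ∑ i, v i ^ 2 :=
  Finset.sum_nonneg fun _ _ => sq_nonneg _

lemma sum_sum_sq_nonneg {m n : ℕ} (X : Matrix (Fin m) (Fin n) ℝ) :
    0 ≤ ∑ i, ∑ j, X i j ^ 2 :=
  Finset.sum_nonneg fun _ _ => sum_sq_nonneg _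

lemma frobNorm_nonneg {m n : ℕ} (X : Matrix (Fin m) (Fin n) ℝ) : 0 ≤ frobNorm X :=
  Real.sqrt_nonneg _

/-- Fundamental pointwise bound: ∑ (Av)² ≤ (∑∑A²) ∑v². -/
lemma mulVec_sq_bound {m n : ℕ} (A : Matrix (Fin m) (Fin n) ℝ) (v : Fin n → ℝ) :
    ∑ i, (A.mulVec v i) ^ 2 ≤ (∑ i, ∑ j, A i j ^ 2) * ∑ j, v j ^ 2 := by
  have key : ∀ i, (A.mulVec v i) ^ 2 ≤ (∑ j, A i j ^ 2) * (∑ j, v j ^ 2) := by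
    intro i
    simpa [Matrix.mulVec, dotProduct] using
      Finset.sum_mul_sq_le_sq_mul_sq Finset.univ (fun j => A i j) v
  calc ∑ i, (A.mulVec v i) ^ 2 ≤ ∑ i, (∑ j, A i j ^ 2) * (∑ j, v j ^ 2) :=
        Finset.sum_le_sum fun i _ => key i
    _ = (∑ i, ∑ j, A i j ^ 2) * ∑ j, v j ^ 2 := by rw [← Finset.sum_mul]

/-- The Frobenius norm belongs to the defining set of `opNorm`. -/
lemma frob_mem_opNorm_set {n : ℕ} (A : Matrix (Fin n) (Fin n) ℝ) :
    (frobNorm A) ∈ {c : ℝ | 0 ≤ c ∧ ∀ v : Fin n → ℝ,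
      Real.sqrt (∑ i, (A.mulVec v i) ^ 2) ≤ c * Real.sqrt (∑ i, (v i) ^ 2)} := by
  refine ⟨Real.sqrt_nonneg _, fun v => ?_⟩
  rw [frobNorm, ← Real.sqrt_mul (sum_sum_sq_nonneg A)]
  exact Real.sqrt_le_sqrt (mulVec_sq_bound A v)

lemma opNorm_nonneg {n : ℕ} (A : Matrix (Fin n) (Fin n) ℝ) : 0 ≤ opNorm A :=
  le_csInf ⟨_, frob_mem_opNorm_set A⟩ fun _ hc => hc.1

lemma opNorm_bddBelow {n : ℕ} (A : Matrix (Fin n) (Fin n) ℝ) :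
    BddBelow {c : ℝ | 0 ≤ c ∧ ∀ v : Fin n → ℝ,
      Real.sqrt (∑ i, (A.mulVec v i) ^ 2) ≤ c * Real.sqrt (∑ i, (v i) ^ 2)} :=
  ⟨0, fun _ hc => hc.1⟩

/-- The operator norm satisfies its defining inequality. -/
lemma opNorm_bound {n : ℕ} (A : Matrix (Fin n) (Fin n) ℝ) (v : Fin n → ℝ) :
    Real.sqrt (∑ i, (A.mulVec v i) ^ 2) ≤ opNorm A * Real.sqrt (∑ i, (v i) ^ 2) := by
  rcases (Real.sqrt_nonneg (∑ i, (v i) ^ 2)).eq_or_lt with h | hv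
  · -- ‖v‖ = 0, so v = 0
    have hsum : (∑ i, (v i) ^ 2) = 0 := by
      have := Real.sqrt_eq_zero (sum_sq_nonneg v) |>.mp h.symm
      exact this
    have hvz : ∀ i ∈ Finset.univ, (v i) ^ 2 = 0 :=
      (Finset.sum_eq_zero_iff_of_nonneg fun i _ => sq_nonneg (v i)).mp hsum
    have hv0 : v = 0 := by
      funext i
      exact pow_eq_zero_iff two_ne_zero |>.mp (hvz i (Finset.mem_univ i))
    subst hv0
    simp [Matrix.mulVec_zero]
  · -- ‖v‖ > 0
    by_contra hcon
    push_neg at hcon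
    have hlt : opNorm A < Real.sqrt (∑ i, (A.mulVec v i) ^ 2) / Real.sqrt (∑ i, (v i) ^ 2) :=
      (lt_div_iff₀ hv).mpr (by linarith [hcon])
    obtain ⟨c, hc, hclt⟩ := exists_lt_of_csInf_lt ⟨_, frob_mem_opNorm_set A⟩ hlt
    have hb := hc.2 v
    have : Real.sqrt (∑ i, (A.mulVec v i) ^ 2) < Real.sqrt (∑ i, (A.mulVec v i) ^ 2) := by
      calc Real.sqrt (∑ i, (A.mulVec v i) ^ 2) ≤ c * Real.sqrt (∑ i, (v i) ^ 2) := hb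
        _ < (Real.sqrt (∑ i, (A.mulVec v i) ^ 2) / Real.sqrt (∑ i, (v i) ^ 2)) *
            Real.sqrt (∑ i, (v i) ^ 2) := by
              exact mul_lt_mul_of_pos_right hclt hv
        _ = Real.sqrt (∑ i, (A.mulVec v i) ^ 2) := div_mul_cancel₀ _ (ne_of_gt hv)
    exact lt_irrefl _ this

/-- Squared form of the operator norm bound. -/
lemma opNorm_sq_bound {n : ℕ} (A : Matrix (Fin n) (Fin n) ℝ) (v : Fin n → ℝ) :
    ∑ i, (A.mulVec v i) ^ 2 ≤ (opNorm A) ^ 2 * ∑ i, (v i) ^ 2 := by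
  have h := opNorm_bound A v
  have h2 : (Real.sqrt (∑ i, (A.mulVec v i) ^ 2)) ^ 2 ≤
      (opNorm A * Real.sqrt (∑ i, (v i) ^ 2)) ^ 2 := by
    apply pow_le_pow_left₀ (Real.sqrt_nonneg _) h
  rw [Real.sq_sqrt (sum_sq_nonneg _)] at h2
  calc ∑ i, (A.mulVec v i) ^ 2 ≤ (opNorm A * Real.sqrt (∑ i, (v i) ^ 2)) ^ 2 := h2
    _ = (opNorm A) ^ 2 * ∑ i, (v i) ^ 2 := by
        rw [mul_pow, Real.sq_sqrt (sum_sq_nonneg _)]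

/-- Operator norm bound for the transpose, via the standard ‖Aᵀu‖² = ⟨u, A(Aᵀu)⟩ trick. -/
lemma opNorm_transpose_bound {n : ℕ} (A : Matrix (Fin n) (Fin n) ℝ) (u : Fin n → ℝ) :
    Real.sqrt (∑ i, (A.transpose.mulVec u i) ^ 2) ≤
      opNorm A * Real.sqrt (∑ i, (u i) ^ 2) := by
  set w : Fin n → ℝ := A.transpose.mulVec u with hw
  -- ∑ w² = ∑_i u i * (A.mulVec w) i
  have hkey : ∑ i, w i ^ 2 = ∑ i, u i * (A.mulVec w) i := by
    simp only [hw, Matrix.mulVec, dotProduct, Matrix.transpose_apply]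
    have step1 : ∀ i, u i * (∑ j, A i j * (∑ k, A k j * u k))
        = ∑ j, (A i j * u i) * (∑ k, A k j * u k) := by
      intro i
      rw [Finset.mul_sum]
      exact Finset.sum_congr rfl fun j _ => by ring
    calc ∑ j, (∑ i, A i j * u i) ^ 2
        = ∑ j, ∑ i, (A i j * u i) * (∑ k, A k j * u k) := by
          refine Finset.sum_congr rfl fun j _ => ?_
          rw [pow_two, Finset.sum_mul]
      _ = ∑ i, ∑ j, (A i j * u i) * (∑ k, A k j * u k) := Finset.sum_comm
      _ = ∑ i, u i * (∑ j, A i j * (∑ k, A k j * u k)) :=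
          Finset.sum_congr rfl fun i _ => (step1 i).symm
  -- Cauchy-Schwarz: (∑ u i * (Aw) i)² ≤ (∑ u²)(∑ (Aw)²)
  have hcs : (∑ i, u i * (A.mulVec w) i) ^ 2 ≤
      (∑ i, u i ^ 2) * ∑ i, (A.mulVec w i) ^ 2 :=
    Finset.sum_mul_sq_le_sq_mul_sq Finset.univ u (A.mulVec w)
  have hAw : ∑ i, (A.mulVec w i) ^ 2 ≤ (opNorm A) ^ 2 * ∑ i, w i ^ 2 :=
    opNorm_sq_bound A w
  -- combine: (∑ w²)² ≤ (∑ u²) * opA² * (∑ w²)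
  have hcomb : (∑ i, w i ^ 2) ^ 2 ≤ (∑ i, u i ^ 2) * ((opNorm A) ^ 2 * ∑ i, w i ^ 2) := by
    calc (∑ i, w i ^ 2) ^ 2 = (∑ i, u i * (A.mulVec w) i) ^ 2 := by rw [hkey]
      _ ≤ (∑ i, u i ^ 2) * ∑ i, (A.mulVec w i) ^ 2 := hcs
      _ ≤ (∑ i, u i ^ 2) * ((opNorm A) ^ 2 * ∑ i, w i ^ 2) :=
          mul_le_mul_of_nonneg_left hAw (sum_sq_nonneg u)
  -- conclude ∑ w² ≤ opA² ∑ u²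
  have hfinal : ∑ i, w i ^ 2 ≤ (opNorm A) ^ 2 * ∑ i, u i ^ 2 := by
    rcases (sum_sq_nonneg w).eq_or_lt with h0 | h0
    · rw [← h0]
      exact mul_nonneg (sq_nonneg _) (sum_sq_nonneg u)
    · have := le_of_mul_le_mul_right (by
        calc (∑ i, w i ^ 2) * (∑ i, w i ^ 2)
            = (∑ i, w i ^ 2) ^ 2 := (pow_two _).symm
          _ ≤ (∑ i, u i ^ 2) * ((opNorm A) ^ 2 * ∑ i, w i ^ 2) := hcomb
          _ = ((opNorm A) ^ 2 * ∑ i, u i ^ 2) * (∑ i, w i ^ 2) := by ring) h0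
      exact this
  calc Real.sqrt (∑ i, w i ^ 2) ≤ Real.sqrt ((opNorm A) ^ 2 * ∑ i, u i ^ 2) :=
        Real.sqrt_le_sqrt hfinal
    _ = opNorm A * Real.sqrt (∑ i, u i ^ 2) := by
        rw [Real.sqrt_mul (sq_nonneg _), Real.sqrt_sq (opNorm_nonneg A)]

/-- Frobenius norm of a transpose. -/
lemma frobNorm_transpose {m n : ℕ} (X : Matrix (Fin m) (Fin n) ℝ) :
    frobNorm X.transpose = frobNorm X := by
  unfold frobNorm
  congr 1
  rw [Finset.sum_comm]
  rfl

/-- If B satisfies ‖Bv‖ ≤ c‖v‖ and c ≥ 0 then ‖BY‖_F ≤ c ‖Y‖_F. -/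
lemma frob_mul_left_bound {m n p : ℕ} (B : Matrix (Fin m) (Fin n) ℝ)
    (Y : Matrix (Fin n) (Fin p) ℝ) (c : ℝ) (hc : 0 ≤ c)
    (h : ∀ v : Fin n → ℝ,
      Real.sqrt (∑ i, (B.mulVec v i) ^ 2) ≤ c * Real.sqrt (∑ i, (v i) ^ 2)) :
    frobNorm (B * Y) ≤ c * frobNorm Y := by
  have hsq : ∀ v : Fin n → ℝ, ∑ i, (B.mulVec v i) ^ 2 ≤ c ^ 2 * ∑ i, (v i) ^ 2 := by
    intro v
    have h1 := h v
    have h2 : (Real.sqrt (∑ i, (B.mulVec v i) ^ 2)) ^ 2 ≤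
        (c * Real.sqrt (∑ i, (v i) ^ 2)) ^ 2 :=
      pow_le_pow_left₀ (Real.sqrt_nonneg _) h1 2
    rw [Real.sq_sqrt (sum_sq_nonneg _)] at h2
    calc ∑ i, (B.mulVec v i) ^ 2 ≤ (c * Real.sqrt (∑ i, (v i) ^ 2)) ^ 2 := h2
      _ = c ^ 2 * ∑ i, (v i) ^ 2 := by rw [mul_pow, Real.sq_sqrt (sum_sq_nonneg _)]
  -- sum over columns
  have hcol : ∀ j, ∑ i, ((B * Y) i j) ^ 2 ≤ c ^ 2 * ∑ i, (Y i j) ^ 2 := by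
    intro j
    have : ∀ i, (B * Y) i j = B.mulVec (fun k => Y k j) i := by
      intro i
      simp [Matrix.mul_apply, Matrix.mulVec, dotProduct]
    calc ∑ i, ((B * Y) i j) ^ 2 = ∑ i, (B.mulVec (fun k => Y k j) i) ^ 2 := by
          apply Finset.sum_congr rfl; intro i _; rw [this i]
      _ ≤ c ^ 2 * ∑ i, (Y i j) ^ 2 := hsq _
  have hsum : ∑ i, ∑ j, ((B * Y) i j) ^ 2 ≤ c ^ 2 * ∑ i, ∑ j, (Y i j) ^ 2 := by
    rw [Finset.sum_comm, Finset.sum_comm (f := fun i j => (Y i j) ^ 2)]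
    calc ∑ j, ∑ i, ((B * Y) i j) ^ 2 ≤ ∑ j, c ^ 2 * ∑ i, (Y i j) ^ 2 :=
          Finset.sum_le_sum fun j _ => hcol j
      _ = c ^ 2 * ∑ j, ∑ i, (Y i j) ^ 2 := by rw [Finset.mul_sum]
  calc frobNorm (B * Y) ≤ Real.sqrt (c ^ 2 * ∑ i, ∑ j, (Y i j) ^ 2) :=
        Real.sqrt_le_sqrt hsum
    _ = c * frobNorm Y := by
        rw [Real.sqrt_mul (sq_nonneg _), Real.sqrt_sq hc]; rfl

/-- The main Frobenius-norm contraction estimate. -/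
lemma frob_sandwich_bound {V d : ℕ} (A : Matrix (Fin V) (Fin V) ℝ)
    (W : Matrix (Fin d) (Fin d) ℝ) (Y : Matrix (Fin V) (Fin d) ℝ) :
    frobNorm (A * Y * W) ≤ opNorm A * opNorm W * frobNorm Y := by
  have h1 : frobNorm (A * (Y * W)) ≤ opNorm A * frobNorm (Y * W) :=
    frob_mul_left_bound A (Y * W) (opNorm A) (opNorm_nonneg A) (opNorm_bound A)
  have h2 : frobNorm (Y * W) ≤ opNorm W * frobNorm Y := by
    have ht : (Y * W).transpose = W.transpose * Y.transpose := Matrix.transpose_mul Y W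
    rw [← frobNorm_transpose (Y * W), ht, ← frobNorm_transpose Y]
    exact frob_mul_left_bound W.transpose Y.transpose (opNorm W) (opNorm_nonneg W)
      (opNorm_transpose_bound W)
  calc frobNorm (A * Y * W) = frobNorm (A * (Y * W)) := by rw [Matrix.mul_assoc]
    _ ≤ opNorm A * frobNorm (Y * W) := h1
    _ ≤ opNorm A * (opNorm W * frobNorm Y) :=
        mul_le_mul_of_nonneg_left h2 (opNorm_nonneg A)
    _ = opNorm A * opNorm W * frobNorm Y := by ring

end AuxGNN

/-- If the subspace M is invariant under X ↦ AXW, then the linear GNN layer contracts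
the projection loss: θ_M(AXW) ≤ ‖A‖_op ‖W‖_op θ_M(X). -/
theorem projLoss_contracts_under_invariant_layer (V d : ℕ)
    (M : Submodule ℝ (Matrix (Fin V) (Fin d) ℝ))
    (A : Matrix (Fin V) (Fin V) ℝ) (W : Matrix (Fin d) (Fin d) ℝ)
    (hinv : ∀ Z ∈ M, A * Z * W ∈ M)
    (X : Matrix (Fin V) (Fin d) ℝ) :
    projLoss M (A * X * W) ≤ opNorm A * opNorm W * projLoss M X := by
  set c := opNorm A * opNorm W with hc
  have hc0 : 0 ≤ c := mul_nonneg (AuxGNN.opNorm_nonneg A) (AuxGNN.opNorm_nonneg W)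
  set S : Set ℝ := {r : ℝ | ∃ Z ∈ M, r = frobNorm (X - Z)} with hS
  set S' : Set ℝ := {r : ℝ | ∃ Z ∈ M, r = frobNorm (A * X * W - Z)} with hS'
  have hSne : S.Nonempty := ⟨frobNorm (X - 0), 0, M.zero_mem, rfl⟩
  have hS'bdd : BddBelow S' := by
    refine ⟨0, fun r hr => ?_⟩
    obtain ⟨Z, _, rfl⟩ := hr
    exact AuxGNN.frobNorm_nonneg _
  -- key claim: sInf S' ≤ c * r for all r ∈ S
  have hclaim : ∀ r ∈ S, sInf S' ≤ c * r := by
    intro r hr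
    obtain ⟨Z, hZ, rfl⟩ := hr
    have hmem : frobNorm (A * X * W - A * Z * W) ∈ S' :=
      ⟨A * Z * W, hinv Z hZ, rfl⟩
    have heq : A * X * W - A * Z * W = A * (X - Z) * W := by
      rw [Matrix.mul_sub, Matrix.sub_mul]
    calc sInf S' ≤ frobNorm (A * X * W - A * Z * W) := csInf_le hS'bdd hmem
      _ = frobNorm (A * (X - Z) * W) := by rw [heq]
      _ ≤ c * frobNorm (X - Z) := AuxGNN.frob_sandwich_bound A W (X - Z)
  show sInf S' ≤ c * sInf S
  rcases hc0.eq_or_lt with h0 | h0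
  · rw [← h0, zero_mul]
    obtain ⟨r, hr⟩ := hSne
    have := hclaim r hr
    rw [← h0, zero_mul] at this
    exact this
  · rw [mul_comm, ← div_le_iff₀ h0]
    apply le_csInf hSne
    intro r hr
    rw [div_le_iff₀ h0, mul_comm]
    exact hclaim r hr
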